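/- Let (u_θ)_{θ∈I} be a smooth family of model eigenfunctions of H(θ) with eigenvalues σ(θ). Then the Feynman–Hellmann formula holds: for every θ ∈ I, σ'(θ) = 2 ∫_{ℝ²₊} V_θ ∂_θV_θ u_θ² ds dt = −2 ∫_{ℝ²₊} (t cos θ − s sin θ)(t sin θ + s cos θ) u_θ(s,t)² ds dt. -/

import Mathlib

open Real MeasureTheory Set

noncomputable section

/-- Partial derivative with respect to the first variable. -/
def pd1 (u : ℝ → ℝ → ℝ) : ℝ → ℝ → ℝ := fun s t => deriv (fun x => u x t) s

/-- Partial derivative with respect to the second variable. -/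
def pd2 (u : ℝ → ℝ → ℝ) : ℝ → ℝ → ℝ := fun s t => deriv (fun y => u s y) t

/-- The potential `V_θ(s,t) = t cos θ − s sin θ`. -/
def Vpot (θ : ℝ) : ℝ → ℝ → ℝ := fun s t => t * Real.cos θ - s * Real.sin θ

/-- The operator `H(θ) = −∂_s² − ∂_t² + V_θ²` applied to `u`. -/
def Hop (θ : ℝ) (u : ℝ → ℝ → ℝ) : ℝ → ℝ → ℝ :=
  fun s t => - pd1 (pd1 u) s t - pd2 (pd2 u) s t + (Vpot θ s t)^2 * u s t

/-- Integral over the half-plane `{t > 0}` with respect to `ds dt`. -/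
def intHalf (f : ℝ → ℝ → ℝ) : ℝ := ∫ s : ℝ, ∫ t in Set.Ioi (0:ℝ), f s t

/-- Schwartz-class on the closed half-plane: all iterated partial derivatives decay
faster than any power of `|s| + t`. -/
def SchwartzHalf (u : ℝ → ℝ → ℝ) : Prop :=
  ∀ k l n : ℕ, ∃ C : ℝ, ∀ s t : ℝ, 0 ≤ t →
    |pd1^[k] (pd2^[l] u) s t| ≤ C * (1 + |s| + t) ^ (-(n:ℝ))

namespace FH

open Filter Function Topology

abbrev μH : Measure (ℝ × ℝ) := (volume : Measure ℝ).prod ((volume : Measure ℝ).restrict (Set.Ioi (0:ℝ)))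

def Dec (n : ℕ) (f : ℝ → ℝ → ℝ) : Prop :=
  ∃ C : ℝ, 0 ≤ C ∧ ∀ s t : ℝ, 0 ≤ t → |f s t| ≤ C * ((1 + |s| + t) ^ n)⁻¹

lemma one_le_X (s t : ℝ) (ht : 0 ≤ t) : 1 ≤ 1 + |s| + t := by
  have := abs_nonneg s; linarith

lemma X_pos (s t : ℝ) (ht : 0 ≤ t) : 0 < 1 + |s| + t :=
  lt_of_lt_of_le one_pos (one_le_X s t ht)

lemma Dec.of_schwartz {w : ℝ → ℝ → ℝ} (hw : SchwartzHalf w) (k l n : ℕ) :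
    Dec n (pd1^[k] (pd2^[l] w)) := by
  obtain ⟨C, hC⟩ := hw k l n
  refine ⟨|C|, abs_nonneg C, fun s t ht => ?_⟩
  have h1 := hC s t ht
  have h2 : (1 + |s| + t) ^ (-(n:ℝ)) = ((1 + |s| + t) ^ n)⁻¹ := by
    rw [Real.rpow_neg (X_pos s t ht).le, Real.rpow_natCast]
  rw [h2] at h1
  exact h1.trans (mul_le_mul_of_nonneg_right (le_abs_self C) (by positivity))

lemma Dec.mono {n : ℕ} {f : ℝ → ℝ → ℝ} (hf : Dec n f) {m : ℕ} (hm : m ≤ n) : Dec m f := by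
  obtain ⟨C, hC0, hC⟩ := hf
  refine ⟨C, hC0, fun s t ht => (hC s t ht).trans (mul_le_mul_of_nonneg_left ?_ hC0)⟩
  have h1 := one_le_X s t ht
  have h2 : (1 + |s| + t) ^ m ≤ (1 + |s| + t) ^ n := pow_le_pow_right₀ h1 hm
  exact inv_anti₀ (pow_pos (X_pos s t ht) m) h2

lemma Dec.mul {n m : ℕ} {f g : ℝ → ℝ → ℝ} (hf : Dec n f) (hg : Dec m g) :
    Dec (n + m) (fun s t => f s t * g s t) := by
  obtain ⟨C, hC0, hC⟩ := hf; obtain ⟨D, hD0, hD⟩ := hg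
  refine ⟨C * D, by positivity, fun s t ht => ?_⟩
  have hX := X_pos s t ht
  rw [abs_mul, pow_add, mul_inv]
  calc |f s t| * |g s t| ≤ (C * ((1 + |s| + t) ^ n)⁻¹) * (D * ((1 + |s| + t) ^ m)⁻¹) :=
        mul_le_mul (hC s t ht) (hD s t ht) (abs_nonneg _) (by positivity)
    _ = C * D * (((1 + |s| + t) ^ n)⁻¹ * ((1 + |s| + t) ^ m)⁻¹) := by ring

lemma Dec.add {n : ℕ} {f g : ℝ → ℝ → ℝ} (hf : Dec n f) (hg : Dec n g) :
    Dec n (fun s t => f s t + g s t) := by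
  obtain ⟨C, hC0, hC⟩ := hf; obtain ⟨D, hD0, hD⟩ := hg
  refine ⟨C + D, by positivity, fun s t ht => ?_⟩
  calc |f s t + g s t| ≤ |f s t| + |g s t| := abs_add_le _ _
    _ ≤ C * ((1 + |s| + t) ^ n)⁻¹ + D * ((1 + |s| + t) ^ n)⁻¹ := add_le_add (hC s t ht) (hD s t ht)
    _ = (C + D) * ((1 + |s| + t) ^ n)⁻¹ := by ring

lemma Dec.neg {n : ℕ} {f : ℝ → ℝ → ℝ} (hf : Dec n f) : Dec n (fun s t => - f s t) := by
  obtain ⟨C, hC0, hC⟩ := hf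
  exact ⟨C, hC0, fun s t ht => by rw [abs_neg]; exact hC s t ht⟩

lemma Dec.sub {n : ℕ} {f g : ℝ → ℝ → ℝ} (hf : Dec n f) (hg : Dec n g) :
    Dec n (fun s t => f s t - g s t) := by
  have := hf.add hg.neg; simpa [sub_eq_add_neg] using this

lemma Dec.const_mul {n : ℕ} {f : ℝ → ℝ → ℝ} (hf : Dec n f) (c : ℝ) :
    Dec n (fun s t => c * f s t) := by
  obtain ⟨C, hC0, hC⟩ := hf
  refine ⟨|c| * C, by positivity, fun s t ht => ?_⟩
  rw [abs_mul, mul_assoc]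
  exact mul_le_mul_of_nonneg_left (hC s t ht) (abs_nonneg c)

lemma Dec.mul_growth {n k : ℕ} {f g : ℝ → ℝ → ℝ}
    (hg : ∀ s t : ℝ, 0 ≤ t → |g s t| ≤ (1 + |s| + t) ^ k) (hf : Dec (n + k) f) :
    Dec n (fun s t => g s t * f s t) := by
  obtain ⟨C, hC0, hC⟩ := hf
  refine ⟨C, hC0, fun s t ht => ?_⟩
  have hX := X_pos s t ht
  rw [abs_mul]
  calc |g s t| * |f s t| ≤ (1 + |s| + t) ^ k * (C * ((1 + |s| + t) ^ (n + k))⁻¹) :=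
        mul_le_mul (hg s t ht) (hC s t ht) (abs_nonneg _) (by positivity)
    _ = C * ((1 + |s| + t) ^ n)⁻¹ := by
        rw [pow_add]
        field_simp

def wt : ℝ × ℝ → ℝ := fun p => (1 + p.1 ^ 2)⁻¹ * (1 + p.2 ^ 2)⁻¹

lemma wt_cont : Continuous wt := by
  apply Continuous.mul
  · exact (continuous_const.add ((continuous_fst).pow 2)).inv₀ (fun x => (by positivity : (0:ℝ) < 1 + x.1 ^ 2).ne')
  · exact (continuous_const.add ((continuous_snd).pow 2)).inv₀ (fun x => (by positivity : (0:ℝ) < 1 + x.2 ^ 2).ne')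

lemma wt_nonneg (p : ℝ × ℝ) : 0 ≤ wt p := by
  have : (0:ℝ) < 1 + p.1 ^ 2 := by positivity
  have : (0:ℝ) < 1 + p.2 ^ 2 := by positivity
  unfold wt; positivity

lemma wt_integrable : Integrable wt μH :=
  integrable_inv_one_add_sq.mul_prod integrable_inv_one_add_sq.restrict

lemma key_wt (s t : ℝ) (ht : 0 ≤ t) : ((1 + |s| + t) ^ 4)⁻¹ ≤ wt (s, t) := by
  have ha := abs_nonneg s
  have h1 : 1 + s ^ 2 ≤ (1 + |s| + t) ^ 2 := by nlinarith [sq_abs s]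
  have h2 : 1 + t ^ 2 ≤ (1 + |s| + t) ^ 2 := by nlinarith [sq_abs s]
  have hp1 : (0:ℝ) < 1 + s ^ 2 := by positivity
  have hp2 : (0:ℝ) < 1 + t ^ 2 := by positivity
  have key : (1 + s ^ 2) * (1 + t ^ 2) ≤ (1 + |s| + t) ^ 4 := by nlinarith
  have : wt (s, t) = ((1 + s ^ 2) * (1 + t ^ 2))⁻¹ := by rw [wt, mul_inv]
  rw [this]
  gcongr

lemma ae_pos : ∀ᵐ p ∂μH, 0 < p.2 := by
  rw [ae_iff]
  have hset : {p : ℝ × ℝ | ¬ 0 < p.2} = (univ : Set ℝ) ×ˢ (Iic (0:ℝ)) := by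
    ext ⟨x, y⟩; simp [not_lt]
  rw [hset]
  simp only [μH]
  rw [Measure.prod_prod, Measure.restrict_apply measurableSet_Iic]
  have : Iic (0:ℝ) ∩ Ioi 0 = ∅ := by
    ext x; simp only [mem_inter_iff, mem_Iic, mem_Ioi, mem_empty_iff_false, iff_false, not_and]
    intro h1 h2; linarith
  rw [this]; simp

lemma Dec.integrable {f : ℝ → ℝ → ℝ} (hf : Dec 4 f)
    (hc : Continuous fun p : ℝ × ℝ => f p.1 p.2) :
    Integrable (fun p : ℝ × ℝ => f p.1 p.2) μH := by
  obtain ⟨C, hC0, hC⟩ := hf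
  refine (wt_integrable.const_mul C).mono hc.aestronglyMeasurable ?_
  filter_upwards [ae_pos] with p hp
  have h := (hC p.1 p.2 hp.le).trans (mul_le_mul_of_nonneg_left (key_wt p.1 p.2 hp.le) hC0)
  rw [Real.norm_eq_abs, Real.norm_eq_abs]
  refine h.trans (le_abs_self _)

lemma Dec.integrableOn_t {f : ℝ → ℝ → ℝ} (hf : Dec 2 f)
    (hc : Continuous fun p : ℝ × ℝ => f p.1 p.2) (s : ℝ) :
    IntegrableOn (fun t => f s t) (Ioi 0) := by
  obtain ⟨C, hC0, hC⟩ := hf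
  refine ((integrable_inv_one_add_sq.const_mul C).restrict (s := Ioi 0)).mono
    ((hc.comp (Continuous.prodMk_right s)).aestronglyMeasurable) ?_
  filter_upwards [ae_restrict_mem measurableSet_Ioi] with t ht
  have h0 : (0:ℝ) ≤ t := le_of_lt ht
  have h1 : 1 + t ^ 2 ≤ (1 + |s| + t) ^ 2 := by nlinarith [abs_nonneg s, sq_abs s]
  rw [Real.norm_eq_abs, Real.norm_eq_abs]
  refine (hC s t h0).trans (le_trans ?_ (le_abs_self _))
  gcongr

lemma Dec.integrable_s {f : ℝ → ℝ → ℝ} (hf : Dec 2 f)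
    (hc : Continuous fun p : ℝ × ℝ => f p.1 p.2) (t : ℝ) (ht : 0 ≤ t) :
    MeasureTheory.Integrable (fun s => f s t) := by
  obtain ⟨C, hC0, hC⟩ := hf
  refine (integrable_inv_one_add_sq.const_mul C).mono
    ((hc.comp (continuous_id.prodMk continuous_const)).aestronglyMeasurable) ?_
  refine Eventually.of_forall (fun s => ?_)
  have h1 : 1 + s ^ 2 ≤ (1 + |s| + t) ^ 2 := by nlinarith [abs_nonneg s, sq_abs s]
  rw [Real.norm_eq_abs, Real.norm_eq_abs]
  refine (hC s t ht).trans (le_trans ?_ (le_abs_self _))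
  gcongr

lemma Dec.tendsto_t {f : ℝ → ℝ → ℝ} (hf : Dec 1 f) (s : ℝ) :
    Tendsto (fun t => f s t) atTop (𝓝 0) := by
  obtain ⟨C, hC0, hC⟩ := hf
  have hg : Tendsto (fun t : ℝ => C * (1 + t)⁻¹) atTop (𝓝 (C * 0)) :=
    Tendsto.const_mul C (Tendsto.inv_tendsto_atTop (tendsto_atTop_add_const_left _ 1 tendsto_id))
  rw [mul_zero] at hg
  refine squeeze_zero_norm' ?_ hg
  filter_upwards [eventually_ge_atTop (0:ℝ)] with t ht
  have h1 : (1:ℝ) + t ≤ 1 + |s| + t := by have := abs_nonneg s; linarith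
  have h2 : (0:ℝ) < 1 + t := by linarith
  rw [Real.norm_eq_abs]
  refine (hC s t ht).trans ?_
  rw [pow_one]
  gcongr

lemma Dec.tendsto_s_top {f : ℝ → ℝ → ℝ} (hf : Dec 1 f) (t : ℝ) (ht : 0 ≤ t) :
    Tendsto (fun s => f s t) atTop (𝓝 0) := by
  obtain ⟨C, hC0, hC⟩ := hf
  have habs : Tendsto (fun s : ℝ => 1 + |s|) atTop atTop :=
    tendsto_atTop_add_const_left _ 1 tendsto_abs_atTop_atTop
  have hg : Tendsto (fun s : ℝ => C * (1 + |s|)⁻¹) atTop (𝓝 (C * 0)) :=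
    Tendsto.const_mul C (Tendsto.inv_tendsto_atTop habs)
  rw [mul_zero] at hg
  refine squeeze_zero_norm (fun s => ?_) hg
  have h1 : (1:ℝ) + |s| ≤ 1 + |s| + t := by linarith
  have h2 : (0:ℝ) < 1 + |s| := by have := abs_nonneg s; linarith
  rw [Real.norm_eq_abs]
  refine (hC s t ht).trans ?_
  rw [pow_one]
  gcongr

lemma Dec.tendsto_s_bot {f : ℝ → ℝ → ℝ} (hf : Dec 1 f) (t : ℝ) (ht : 0 ≤ t) :
    Tendsto (fun s => f s t) atBot (𝓝 0) := by
  obtain ⟨C, hC0, hC⟩ := hf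
  have habs : Tendsto (fun s : ℝ => 1 + |s|) atBot atTop :=
    tendsto_atTop_add_const_left _ 1 tendsto_abs_atBot_atTop
  have hg : Tendsto (fun s : ℝ => C * (1 + |s|)⁻¹) atBot (𝓝 (C * 0)) :=
    Tendsto.const_mul C (Tendsto.inv_tendsto_atTop habs)
  rw [mul_zero] at hg
  refine squeeze_zero_norm (fun s => ?_) hg
  have h1 : (1:ℝ) + |s| ≤ 1 + |s| + t := by linarith
  have h2 : (0:ℝ) < 1 + |s| := by have := abs_nonneg s; linarith
  rw [Real.norm_eq_abs]
  refine (hC s t ht).trans ?_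
  rw [pow_one]
  gcongr



open scoped ContDiff

def unc (w : ℝ → ℝ → ℝ) : ℝ × ℝ → ℝ := fun p => w p.1 p.2

lemma hasDerivAt_sect1 {w : ℝ → ℝ → ℝ} (hW : ContDiff ℝ ∞ (unc w)) (s t : ℝ) :
    HasDerivAt (fun x => w x t) (fderiv ℝ (unc w) (s, t) (1, 0)) s := by
  have h1 : HasFDerivAt (unc w) (fderiv ℝ (unc w) (s, t)) (s, t) :=
    ((hW.differentiable (by simp)) (s, t)).hasFDerivAt
  have h2 : HasDerivAt (fun x : ℝ => ((x, t) : ℝ × ℝ)) (1, 0) s :=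
    (hasDerivAt_id s).prodMk (hasDerivAt_const s t)
  exact h1.comp_hasDerivAt s h2

lemma hasDerivAt_sect2 {w : ℝ → ℝ → ℝ} (hW : ContDiff ℝ ∞ (unc w)) (s t : ℝ) :
    HasDerivAt (fun y => w s y) (fderiv ℝ (unc w) (s, t) (0, 1)) t := by
  have h1 : HasFDerivAt (unc w) (fderiv ℝ (unc w) (s, t)) (s, t) :=
    ((hW.differentiable (by simp)) (s, t)).hasFDerivAt
  have h2 : HasDerivAt (fun y : ℝ => ((s, y) : ℝ × ℝ)) (0, 1) t :=
    (hasDerivAt_const t s).prodMk (hasDerivAt_id t)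
  exact h1.comp_hasDerivAt t h2

lemma pd1_eq {w : ℝ → ℝ → ℝ} (hW : ContDiff ℝ ∞ (unc w)) (s t : ℝ) :
    pd1 w s t = fderiv ℝ (unc w) (s, t) (1, 0) :=
  (hasDerivAt_sect1 hW s t).deriv

lemma pd2_eq {w : ℝ → ℝ → ℝ} (hW : ContDiff ℝ ∞ (unc w)) (s t : ℝ) :
    pd2 w s t = fderiv ℝ (unc w) (s, t) (0, 1) :=
  (hasDerivAt_sect2 hW s t).deriv

lemma contDiff_pdv {W : ℝ × ℝ → ℝ} (hW : ContDiff ℝ ∞ W) (e : ℝ × ℝ) :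
    ContDiff ℝ ∞ fun p => fderiv ℝ W p e :=
  (hW.fderiv_right (le_of_eq (show (∞ : WithTop ℕ∞) + 1 = ∞ from rfl))).clm_apply contDiff_const

lemma contDiff_unc_pd1 {w : ℝ → ℝ → ℝ} (hW : ContDiff ℝ ∞ (unc w)) :
    ContDiff ℝ ∞ (unc (pd1 w)) := by
  have h : unc (pd1 w) = fun p => fderiv ℝ (unc w) p (1, 0) :=
    funext fun p => pd1_eq hW p.1 p.2
  rw [h]; exact contDiff_pdv hW _

lemma contDiff_unc_pd2 {w : ℝ → ℝ → ℝ} (hW : ContDiff ℝ ∞ (unc w)) :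
    ContDiff ℝ ∞ (unc (pd2 w)) := by
  have h : unc (pd2 w) = fun p => fderiv ℝ (unc w) p (0, 1) :=
    funext fun p => pd2_eq hW p.1 p.2
  rw [h]; exact contDiff_pdv hW _

lemma hd1 {w : ℝ → ℝ → ℝ} (hW : ContDiff ℝ ∞ (unc w)) (s t : ℝ) :
    HasDerivAt (fun x => w x t) (pd1 w s t) s := by
  rw [pd1_eq hW]; exact hasDerivAt_sect1 hW s t

lemma hd2 {w : ℝ → ℝ → ℝ} (hW : ContDiff ℝ ∞ (unc w)) (s t : ℝ) :
    HasDerivAt (fun y => w s y) (pd2 w s t) t := by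
  rw [pd2_eq hW]; exact hasDerivAt_sect2 hW s t

lemma cont_unc {w : ℝ → ℝ → ℝ} (hW : ContDiff ℝ ∞ (unc w)) :
    Continuous fun p : ℝ × ℝ => w p.1 p.2 := hW.continuous

lemma cont_V (θ'' : ℝ) : Continuous fun p : ℝ × ℝ => Vpot θ'' p.1 p.2 := by
  simp only [Vpot]
  fun_prop

lemma cont_unc_Hop {w : ℝ → ℝ → ℝ} (θ'' : ℝ) (hW : ContDiff ℝ ∞ (unc w)) :
    Continuous fun p : ℝ × ℝ => Hop θ'' w p.1 p.2 := by
  simp only [Hop]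
  exact (((cont_unc (contDiff_unc_pd1 (contDiff_unc_pd1 hW))).neg.sub
    (cont_unc (contDiff_unc_pd2 (contDiff_unc_pd2 hW)))).add
    (((cont_V θ'' ).pow 2).mul (cont_unc hW)))

-- Schwartz shape specializations
lemma sch0 {w : ℝ → ℝ → ℝ} (hw : SchwartzHalf w) (n : ℕ) : Dec n w :=
  Dec.of_schwartz hw 0 0 n

lemma sch1 {w : ℝ → ℝ → ℝ} (hw : SchwartzHalf w) (n : ℕ) : Dec n (pd1 w) :=
  Dec.of_schwartz hw 1 0 n

lemma sch2 {w : ℝ → ℝ → ℝ} (hw : SchwartzHalf w) (n : ℕ) : Dec n (pd2 w) :=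
  Dec.of_schwartz hw 0 1 n

lemma sch11 {w : ℝ → ℝ → ℝ} (hw : SchwartzHalf w) (n : ℕ) : Dec n (pd1 (pd1 w)) :=
  Dec.of_schwartz hw 2 0 n

lemma sch22 {w : ℝ → ℝ → ℝ} (hw : SchwartzHalf w) (n : ℕ) : Dec n (pd2 (pd2 w)) :=
  Dec.of_schwartz hw 0 2 n

lemma abs_V_le (θ'' s t : ℝ) (ht : 0 ≤ t) : |Vpot θ'' s t| ≤ (1 + |s| + t) ^ 1 := by
  simp only [Vpot, pow_one]
  calc |t * Real.cos θ'' - s * Real.sin θ''| ≤ |t * Real.cos θ''| + |s * Real.sin θ''| :=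
        abs_sub _ _
    _ ≤ t * 1 + |s| * 1 := by
        rw [abs_mul, abs_mul, abs_of_nonneg ht]
        exact add_le_add (mul_le_mul_of_nonneg_left (Real.abs_cos_le_one θ'') ht)
          (mul_le_mul_of_nonneg_left (Real.abs_sin_le_one θ'') (abs_nonneg s))
    _ ≤ 1 + |s| + t := by linarith

lemma abs_V_sq_le (θ'' s t : ℝ) (ht : 0 ≤ t) : |Vpot θ'' s t ^ 2| ≤ (1 + |s| + t) ^ 2 := by
  rw [abs_pow]
  calc |Vpot θ'' s t| ^ 2 ≤ ((1 + |s| + t) ^ 1) ^ 2 :=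
        pow_le_pow_left₀ (abs_nonneg _) (abs_V_le θ'' s t ht) 2
    _ = (1 + |s| + t) ^ 2 := by ring

lemma dec_Hop {w : ℝ → ℝ → ℝ} (θ'' : ℝ) (hw : SchwartzHalf w) : Dec 2 (Hop θ'' w) := by
  have h1 : Dec 2 (fun s t => - pd1 (pd1 w) s t - pd2 (pd2 w) s t) :=
    (sch11 hw 2).neg.sub (sch22 hw 2)
  have h2 : Dec 2 (fun s t => (Vpot θ'' s t) ^ 2 * w s t) :=
    Dec.mul_growth (fun s t ht => abs_V_sq_le θ'' s t ht) (sch0 hw 4)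
  exact h1.add h2

-- one-dimensional IBP lemmas
lemma integral_real_deriv_eq_zero {h h' : ℝ → ℝ} (hd : ∀ x, HasDerivAt h (h' x) x)
    (hint : Integrable h') (htop : Tendsto h atTop (𝓝 0)) (hbot : Tendsto h atBot (𝓝 0)) :
    ∫ x, h' x = 0 := by
  have e1 : ∫ x in Iic (0:ℝ), h' x = h 0 - 0 :=
    integral_Iic_of_hasDerivAt_of_tendsto (hd 0).continuousAt.continuousWithinAt
      (fun x _ => hd x) hint.integrableOn hbot
  have e2 : ∫ x in Ioi (0:ℝ), h' x = 0 - h 0 :=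
    integral_Ioi_of_hasDerivAt_of_tendsto (hd 0).continuousAt.continuousWithinAt
      (fun x _ => hd x) hint.integrableOn htop
  have e3 := intervalIntegral.integral_Iic_add_Ioi (b := (0:ℝ))
    (hint.integrableOn) (hint.integrableOn)
  rw [e1, e2] at e3
  rw [← e3]; ring

lemma integral_Ioi_deriv {h h' : ℝ → ℝ} (hd : ∀ x, HasDerivAt h (h' x) x)
    (hint : IntegrableOn h' (Ioi 0)) (htop : Tendsto h atTop (𝓝 0)) :
    ∫ x in Ioi (0:ℝ), h' x = - h 0 := by
  have e2 : ∫ x in Ioi (0:ℝ), h' x = 0 - h 0 :=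
    integral_Ioi_of_hasDerivAt_of_tendsto (hd 0).continuousAt.continuousWithinAt
      (fun x _ => hd x) hint htop
  rw [e2]; ring

lemma green (θ'' : ℝ) {w w' : ℝ → ℝ → ℝ}
    (hw : ContDiff ℝ ∞ (unc w)) (hw' : ContDiff ℝ ∞ (unc w'))
    (sw : SchwartzHalf w) (sw' : SchwartzHalf w')
    (nw : ∀ s, pd2 w s 0 = 0) (nw' : ∀ s, pd2 w' s 0 = 0) :
    ∫ p, Hop θ'' w' p.1 p.2 * w p.1 p.2 ∂μH = ∫ p, w' p.1 p.2 * Hop θ'' w p.1 p.2 ∂μH := by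
  set B1 : ℝ → ℝ → ℝ := fun s t => w' s t * pd1 (pd1 w) s t - w s t * pd1 (pd1 w') s t with hB1
  set B2 : ℝ → ℝ → ℝ := fun s t => w' s t * pd2 (pd2 w) s t - w s t * pd2 (pd2 w') s t with hB2
  have decB1 : Dec 4 B1 := ((sch0 sw' 2).mul (sch11 sw 2)).sub ((sch0 sw 2).mul (sch11 sw' 2))
  have decB2 : Dec 4 B2 := ((sch0 sw' 2).mul (sch22 sw 2)).sub ((sch0 sw 2).mul (sch22 sw' 2))
  have contB1 : Continuous fun p : ℝ × ℝ => B1 p.1 p.2 :=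
    ((cont_unc hw').mul (cont_unc (contDiff_unc_pd1 (contDiff_unc_pd1 hw)))).sub
      ((cont_unc hw).mul (cont_unc (contDiff_unc_pd1 (contDiff_unc_pd1 hw'))))
  have contB2 : Continuous fun p : ℝ × ℝ => B2 p.1 p.2 :=
    ((cont_unc hw').mul (cont_unc (contDiff_unc_pd2 (contDiff_unc_pd2 hw)))).sub
      ((cont_unc hw).mul (cont_unc (contDiff_unc_pd2 (contDiff_unc_pd2 hw'))))
  have intB1 : Integrable (fun p : ℝ × ℝ => B1 p.1 p.2) μH := decB1.integrable contB1
  have intB2 : Integrable (fun p : ℝ × ℝ => B2 p.1 p.2) μH := decB2.integrable contB2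
  -- the t-part vanishes
  have hB2zero : ∫ p, B2 p.1 p.2 ∂μH = 0 := by
    have inner : ∀ s : ℝ, (∫ t in Ioi (0:ℝ), B2 s t) = 0 := by
      intro s
      have hQ : ∀ t : ℝ, HasDerivAt (fun y => w' s y * pd2 w s y - w s y * pd2 w' s y)
          (B2 s t) t := by
        intro t
        have h1 := (hd2 hw' s t).mul (hd2 (contDiff_unc_pd2 hw) s t)
        have h2 := (hd2 hw s t).mul (hd2 (contDiff_unc_pd2 hw') s t)
        have h3 := h1.sub h2
        refine HasDerivAt.congr_deriv h3 ?_
        simp only [hB2]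
        ring
      have hint : IntegrableOn (fun t => B2 s t) (Ioi 0) :=
        (decB2.mono (by norm_num)).integrableOn_t contB2 s
      have dP : Dec 1 (fun s t => w' s t * pd2 w s t - w s t * pd2 w' s t) :=
        ((sch0 sw' 1).mul (sch2 sw 0)).sub ((sch0 sw 1).mul (sch2 sw' 0))
      have hten : Tendsto (fun t => w' s t * pd2 w s t - w s t * pd2 w' s t) atTop (𝓝 0) :=
        dP.tendsto_t s
      have hres := integral_Ioi_deriv hQ hint hten
      rw [hres, nw s, nw' s]
      ring
    have e := MeasureTheory.integral_prod (fun p : ℝ × ℝ => B2 p.1 p.2) intB2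
    rw [e]
    have h0 : ∀ x : ℝ, (∫ y in Ioi (0:ℝ), B2 (x, y).1 (x, y).2) = 0 := fun x => inner x
    simp only [h0, integral_zero]
  -- the s-part vanishes
  have hB1zero : ∫ p, B1 p.1 p.2 ∂μH = 0 := by
    have inner : ∀ t : ℝ, 0 < t → (∫ s : ℝ, B1 s t) = 0 := by
      intro t ht
      have ht0 : (0:ℝ) ≤ t := le_of_lt ht
      have hP : ∀ x : ℝ, HasDerivAt (fun x => w' x t * pd1 w x t - w x t * pd1 w' x t)
          (B1 x t) x := by
        intro x
        have h1 := (hd1 hw' x t).mul (hd1 (contDiff_unc_pd1 hw) x t)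
        have h2 := (hd1 hw x t).mul (hd1 (contDiff_unc_pd1 hw') x t)
        have h3 := h1.sub h2
        refine HasDerivAt.congr_deriv h3 ?_
        simp only [hB1]
        ring
      have hint : Integrable (fun x => B1 x t) :=
        (decB1.mono (by norm_num)).integrable_s contB1 t ht0
      have dP : Dec 1 (fun s t => w' s t * pd1 w s t - w s t * pd1 w' s t) :=
        ((sch0 sw' 1).mul (sch1 sw 0)).sub ((sch0 sw 1).mul (sch1 sw' 0))
      exact integral_real_deriv_eq_zero hP hint (dP.tendsto_s_top t ht0) (dP.tendsto_s_bot t ht0)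
    have e := MeasureTheory.integral_prod_symm (fun p : ℝ × ℝ => B1 p.1 p.2) intB1
    rw [e]
    have hae : ∀ᵐ y ∂((volume : Measure ℝ).restrict (Ioi (0:ℝ))),
        (∫ x : ℝ, B1 (x, y).1 (x, y).2) = 0 := by
      filter_upwards [ae_restrict_mem measurableSet_Ioi] with y hy
      exact inner y hy
    rw [integral_congr_ae hae, integral_zero]
  -- assemble
  have decHw : Dec 2 (Hop θ'' w) := dec_Hop θ'' sw
  have int1 : Integrable (fun p : ℝ × ℝ => w' p.1 p.2 * Hop θ'' w p.1 p.2) μH :=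
    ((sch0 sw' 2).mul decHw).integrable ((cont_unc hw').mul (cont_unc_Hop θ'' hw))
  have key : (fun p : ℝ × ℝ => Hop θ'' w' p.1 p.2 * w p.1 p.2)
      = fun p : ℝ × ℝ => (w' p.1 p.2 * Hop θ'' w p.1 p.2 + B1 p.1 p.2) + B2 p.1 p.2 := by
    funext p
    simp only [Hop, hB1, hB2]
    ring
  calc ∫ p, Hop θ'' w' p.1 p.2 * w p.1 p.2 ∂μH
      = ∫ p, ((w' p.1 p.2 * Hop θ'' w p.1 p.2 + B1 p.1 p.2) + B2 p.1 p.2) ∂μH := by rw [key]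
    _ = (∫ p, (w' p.1 p.2 * Hop θ'' w p.1 p.2 + B1 p.1 p.2) ∂μH) + ∫ p, B2 p.1 p.2 ∂μH :=
        integral_add (int1.add intB1) intB2
    _ = ((∫ p, w' p.1 p.2 * Hop θ'' w p.1 p.2 ∂μH) + ∫ p, B1 p.1 p.2 ∂μH)
        + ∫ p, B2 p.1 p.2 ∂μH := by rw [integral_add int1 intB1]
    _ = ∫ p, w' p.1 p.2 * Hop θ'' w p.1 p.2 ∂μH := by rw [hB1zero, hB2zero]; ring

lemma Dec.congr {n : ℕ} {f g : ℝ → ℝ → ℝ} (hfg : ∀ s t : ℝ, f s t = g s t) (hf : Dec n f) :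
    Dec n g := by
  obtain ⟨C, h0, hC⟩ := hf
  exact ⟨C, h0, fun s t ht => by rw [← hfg]; exact hC s t ht⟩

lemma intHalf_eq (f : ℝ → ℝ → ℝ) (hf : Integrable (fun p : ℝ × ℝ => f p.1 p.2) μH) :
    intHalf f = ∫ p, f p.1 p.2 ∂μH := by
  rw [intHalf]
  exact MeasureTheory.integral_integral hf

lemma abs_cos_sub_cos (x y : ℝ) : |Real.cos x - Real.cos y| ≤ |x - y| := by
  rw [Real.cos_sub_cos, abs_mul, abs_mul, abs_neg, abs_two]
  calc 2 * |Real.sin ((x + y) / 2)| * |Real.sin ((x - y) / 2)| ≤ 2 * 1 * |(x - y) / 2| := by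
        have h1 : |Real.sin ((x + y) / 2)| ≤ 1 := Real.abs_sin_le_one _
        have h2 : |Real.sin ((x - y) / 2)| ≤ |(x - y) / 2| := Real.abs_sin_le_abs
        have := mul_le_mul (mul_le_mul_of_nonneg_left h1 (by norm_num : (0:ℝ) ≤ 2)) h2
          (abs_nonneg _) (by positivity)
        linarith
    _ = |x - y| := by rw [abs_div, abs_two]; ring

lemma abs_sin_sub_sin (x y : ℝ) : |Real.sin x - Real.sin y| ≤ |x - y| := by
  rw [Real.sin_sub_sin, abs_mul, abs_mul, abs_two]
  calc 2 * |Real.sin ((x - y) / 2)| * |Real.cos ((x + y) / 2)| ≤ 2 * |(x - y) / 2| * 1 := by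
        have h1 : |Real.sin ((x - y) / 2)| ≤ |(x - y) / 2| := Real.abs_sin_le_abs
        have h2 : |Real.cos ((x + y) / 2)| ≤ 1 := Real.abs_cos_le_one _
        have := mul_le_mul (mul_le_mul_of_nonneg_left h1 (by norm_num : (0:ℝ) ≤ 2)) h2
          (abs_nonneg _) (by positivity)
        linarith
    _ = |x - y| := by rw [abs_div, abs_two]; ring

lemma abs_V_diff_le (θ θ' s t : ℝ) (ht : 0 ≤ t) :
    |Vpot θ' s t - Vpot θ s t| ≤ (1 + |s| + t) * |θ' - θ| := by
  simp only [Vpot]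
  have e : t * Real.cos θ' - s * Real.sin θ' - (t * Real.cos θ - s * Real.sin θ)
      = t * (Real.cos θ' - Real.cos θ) - s * (Real.sin θ' - Real.sin θ) := by ring
  rw [e]
  calc |t * (Real.cos θ' - Real.cos θ) - s * (Real.sin θ' - Real.sin θ)|
      ≤ |t * (Real.cos θ' - Real.cos θ)| + |s * (Real.sin θ' - Real.sin θ)| := abs_sub _ _
    _ ≤ t * |θ' - θ| + |s| * |θ' - θ| := by
        rw [abs_mul, abs_mul, abs_of_nonneg ht]
        exact add_le_add (mul_le_mul_of_nonneg_left (abs_cos_sub_cos θ' θ) ht)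
          (mul_le_mul_of_nonneg_left (abs_sin_sub_sin θ' θ) (abs_nonneg s))
    _ ≤ (1 + |s| + t) * |θ' - θ| := by
        nlinarith [abs_nonneg (θ' - θ), abs_nonneg s]

lemma abs_V_sq_diff_le (θ θ' s t : ℝ) (ht : 0 ≤ t) :
    |Vpot θ' s t ^ 2 - Vpot θ s t ^ 2| ≤ 2 * (1 + |s| + t) ^ 2 * |θ' - θ| := by
  have e : Vpot θ' s t ^ 2 - Vpot θ s t ^ 2
      = (Vpot θ' s t - Vpot θ s t) * (Vpot θ' s t + Vpot θ s t) := by ring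
  rw [e, abs_mul]
  have h1 := abs_V_diff_le θ θ' s t ht
  have h2 : |Vpot θ' s t + Vpot θ s t| ≤ 2 * (1 + |s| + t) := by
    calc |Vpot θ' s t + Vpot θ s t| ≤ |Vpot θ' s t| + |Vpot θ s t| := abs_add_le _ _
      _ ≤ (1 + |s| + t) ^ 1 + (1 + |s| + t) ^ 1 := add_le_add (abs_V_le θ' s t ht) (abs_V_le θ s t ht)
      _ = 2 * (1 + |s| + t) := by ring
  calc |Vpot θ' s t - Vpot θ s t| * |Vpot θ' s t + Vpot θ s t|
      ≤ ((1 + |s| + t) * |θ' - θ|) * (2 * (1 + |s| + t)) :=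
        mul_le_mul h1 h2 (abs_nonneg _) (by positivity)
    _ = 2 * (1 + |s| + t) ^ 2 * |θ' - θ| := by ring

end FH

/-- A model eigenfunction of `H(θ)` with eigenvalue `σ`: smooth up to the boundary,
Schwartz-class, `L²`-normalized, Neumann boundary condition, and `H(θ)u = σu` on `{t ≥ 0}`. -/
structure IsModelEigen (θ : ℝ) (u : ℝ → ℝ → ℝ) (σ : ℝ) : Prop where
  smooth : ∀ n : ℕ, ContDiff ℝ n (fun p : ℝ × ℝ => u p.1 p.2)
  schwartz : SchwartzHalf u
  normalized : intHalf (fun s t => (u s t)^2) = 1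
  neumann : ∀ s : ℝ, pd2 u s 0 = 0
  eigen : ∀ s t : ℝ, 0 ≤ t → Hop θ u s t = σ * u s t

/-- Partial derivative in the parameter `θ` of a family. -/
def pdθ (u : ℝ → ℝ → ℝ → ℝ) : ℝ → ℝ → ℝ → ℝ := fun θ s t => deriv (fun x => u x s t) θ

/-- A smooth family of model eigenfunctions of `H(θ)` with eigenvalues `σ(θ)`,
parametrized by the open interval `Ioo a b ⊆ (0, π/2)`: the map `(θ,s,t) ↦ u θ s t`
is smooth, all its partial derivatives are Schwartz-class in `(s,t)` locally uniformly
in `θ`, `σ` is smooth, and each `u θ` is a model eigenfunction of `H(θ)`. -/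
structure IsSmoothFamily (a b : ℝ) (u : ℝ → ℝ → ℝ → ℝ) (σ : ℝ → ℝ) : Prop where
  sub : Set.Ioo a b ⊆ Set.Ioo 0 (π/2)
  smooth : ∀ n : ℕ, ContDiffOn ℝ n (fun p : ℝ × ℝ × ℝ => u p.1 p.2.1 p.2.2)
      (Set.Ioo a b ×ˢ (Set.univ : Set (ℝ × ℝ)))
  sigma_smooth : ∀ n : ℕ, ContDiffOn ℝ n σ (Set.Ioo a b)
  schwartz : ∀ θ ∈ Set.Ioo a b, ∀ m k l n : ℕ, ∃ ε > 0, ∃ C : ℝ,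
      ∀ θ' ∈ Set.Ioo a b, |θ' - θ| < ε → ∀ s t : ℝ, 0 ≤ t →
      |pd1^[k] (pd2^[l] (pdθ^[m] u θ')) s t| ≤ C * (1 + |s| + t) ^ (-(n:ℝ))
  eigen : ∀ θ ∈ Set.Ioo a b, IsModelEigen θ (u θ) (σ θ)

open FH Filter Function Topology
open scoped ContDiff

/-- The Feynman–Hellmann formula:
`σ'(θ) = 2∫ V_θ ∂_θV_θ u_θ² = −2∫ (t cos θ − s sin θ)(t sin θ + s cos θ) u_θ²`. -/
theorem feynman_hellmann (a b : ℝ) (u : ℝ → ℝ → ℝ → ℝ) (σ : ℝ → ℝ)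
    (h : IsSmoothFamily a b u σ) (θ : ℝ) (hθ : θ ∈ Set.Ioo a b) :
    deriv σ θ = 2 * intHalf (fun s t =>
        Vpot θ s t * (- t * Real.sin θ - s * Real.cos θ) * (u θ s t)^2) ∧
    deriv σ θ = -2 * intHalf (fun s t =>
        (t * Real.cos θ - s * Real.sin θ) * (t * Real.sin θ + s * Real.cos θ) * (u θ s t)^2) := by
  have hE := h.eigen θ hθ
  have hwC : ContDiff ℝ ∞ (unc (u θ)) := contDiff_infty.mpr (fun n => hE.smooth n)
  have sw : SchwartzHalf (u θ) := hE.schwartz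
  obtain ⟨C₀, hC₀0, hC₀⟩ := sch0 sw 4
  obtain ⟨ε₁, hε₁, C₁, hC₁⟩ := h.schwartz θ hθ 0 0 0 4
  have hC₁' : ∀ θ' ∈ Set.Ioo a b, |θ' - θ| < ε₁ → ∀ s t : ℝ, 0 ≤ t →
      |u θ' s t| ≤ |C₁| * ((1 + |s| + t) ^ (4:ℕ))⁻¹ := by
    intro θ' h1 h2 s t ht
    have h3 := hC₁ θ' h1 h2 s t ht
    rw [show ((1 + |s| + t) ^ (-((4:ℕ):ℝ))) = ((1 + |s| + t) ^ (4:ℕ))⁻¹ from by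
      rw [Real.rpow_neg (X_pos s t ht).le, Real.rpow_natCast]] at h3
    exact h3.trans (mul_le_mul_of_nonneg_right (le_abs_self _) (by positivity))
  have hUcont : ∀ p : ℝ × ℝ, ContinuousAt (fun θ' => u θ' p.1 p.2) θ := by
    intro p
    have hΩ : IsOpen (Set.Ioo a b ×ˢ (Set.univ : Set (ℝ × ℝ))) := isOpen_Ioo.prod isOpen_univ
    have hmem : ((θ, p) : ℝ × ℝ × ℝ) ∈ Set.Ioo a b ×ˢ (Set.univ : Set (ℝ × ℝ)) :=
      ⟨hθ, Set.mem_univ _⟩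
    have hca : ContinuousAt (fun q : ℝ × ℝ × ℝ => u q.1 q.2.1 q.2.2) (θ, p) :=
      ((h.smooth 0).continuousOn).continuousAt (hΩ.mem_nhds hmem)
    have hline : ContinuousAt (fun θ' : ℝ => ((θ', p) : ℝ × ℝ × ℝ)) θ :=
      (continuous_id.prodMk continuous_const).continuousAt
    exact ContinuousAt.comp (f := fun θ' : ℝ => ((θ', p) : ℝ × ℝ × ℝ)) (x := θ) hca hline
  set A : ℝ → ℝ := fun θ' => ∫ p, u θ' p.1 p.2 * u θ p.1 p.2 ∂μH with hA_def
  set R : ℝ → ℝ := fun θ' => ∫ p,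
      (Vpot θ' p.1 p.2 ^ 2 - Vpot θ p.1 p.2 ^ 2) * (u θ' p.1 p.2 * u θ p.1 p.2) ∂μH with hR_def
  have ident : ∀ θ' ∈ Set.Ioo a b, (σ θ' - σ θ) * A θ' = R θ' := by
    intro θ' hθ'
    have hE' := h.eigen θ' hθ'
    have hw'C : ContDiff ℝ ∞ (unc (u θ')) := contDiff_infty.mpr (fun n => hE'.smooth n)
    have sw' : SchwartzHalf (u θ') := hE'.schwartz
    have dec_ww' : Dec 4 (fun s t => u θ' s t * u θ s t) := (sch0 sw' 2).mul (sch0 sw 2)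
    have dec_ww6 : Dec 6 (fun s t => u θ' s t * u θ s t) := (sch0 sw' 3).mul (sch0 sw 3)
    have cont_ww' : Continuous fun p : ℝ × ℝ => u θ' p.1 p.2 * u θ p.1 p.2 :=
      (cont_unc hw'C).mul (cont_unc hwC)
    have int_ww' : Integrable (fun p : ℝ × ℝ => u θ' p.1 p.2 * u θ p.1 p.2) μH :=
      dec_ww'.integrable cont_ww'
    have decV : Dec 4 (fun s t => (Vpot θ' s t ^ 2 - Vpot θ s t ^ 2) * (u θ' s t * u θ s t)) := by
      have d1 : Dec 4 (fun s t => Vpot θ' s t ^ 2 * (u θ' s t * u θ s t)) :=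
        Dec.mul_growth (fun s t ht => abs_V_sq_le θ' s t ht) dec_ww6
      have d2 : Dec 4 (fun s t => Vpot θ s t ^ 2 * (u θ' s t * u θ s t)) :=
        Dec.mul_growth (fun s t ht => abs_V_sq_le θ s t ht) dec_ww6
      exact Dec.congr (fun s t => by ring) (d1.sub d2)
    have contV2 : Continuous fun p : ℝ × ℝ =>
        (Vpot θ' p.1 p.2 ^ 2 - Vpot θ p.1 p.2 ^ 2) * (u θ' p.1 p.2 * u θ p.1 p.2) :=
      (((cont_V θ').pow 2).sub ((cont_V θ).pow 2)).mul cont_ww'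
    have intV : Integrable (fun p : ℝ × ℝ =>
        (Vpot θ' p.1 p.2 ^ 2 - Vpot θ p.1 p.2 ^ 2) * (u θ' p.1 p.2 * u θ p.1 p.2)) μH :=
      decV.integrable contV2
    have S1 : ∫ p, Hop θ' (u θ') p.1 p.2 * u θ p.1 p.2 ∂μH = σ θ' * A θ' := by
      have hcg : (fun p : ℝ × ℝ => Hop θ' (u θ') p.1 p.2 * u θ p.1 p.2)
          =ᵐ[μH] fun p => σ θ' * (u θ' p.1 p.2 * u θ p.1 p.2) := by
        filter_upwards [ae_pos] with p hp
        rw [hE'.eigen p.1 p.2 hp.le]; ring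
      rw [integral_congr_ae hcg, MeasureTheory.integral_const_mul]
    have S2 := green θ' hwC hw'C sw sw' hE.neumann hE'.neumann
    have S3 : ∫ p, u θ' p.1 p.2 * Hop θ' (u θ) p.1 p.2 ∂μH = σ θ * A θ' + R θ' := by
      have hcg : (fun p : ℝ × ℝ => u θ' p.1 p.2 * Hop θ' (u θ) p.1 p.2) =ᵐ[μH]
          fun p => σ θ * (u θ' p.1 p.2 * u θ p.1 p.2)
            + (Vpot θ' p.1 p.2 ^ 2 - Vpot θ p.1 p.2 ^ 2) * (u θ' p.1 p.2 * u θ p.1 p.2) := by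
        filter_upwards [ae_pos] with p hp
        have h1 : Hop θ' (u θ) p.1 p.2 = Hop θ (u θ) p.1 p.2
            + (Vpot θ' p.1 p.2 ^ 2 - Vpot θ p.1 p.2 ^ 2) * u θ p.1 p.2 := by
          simp only [Hop]; ring
        rw [h1, hE.eigen p.1 p.2 hp.le]; ring
      rw [integral_congr_ae hcg, integral_add (int_ww'.const_mul _) intV, MeasureTheory.integral_const_mul]
    have hfin : σ θ' * A θ' = σ θ * A θ' + R θ' := (S1.symm.trans S2).trans S3
    linarith [hfin]
  have hAθ : A θ = 1 := by
    have d : Dec 4 (fun s t => (u θ s t) ^ 2) :=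
      Dec.congr (fun s t => by ring) ((sch0 sw 2).mul (sch0 sw 2))
    have hint : Integrable (fun p : ℝ × ℝ => (u θ p.1 p.2) ^ 2) μH :=
      d.integrable ((cont_unc hwC).pow 2)
    have h1 : intHalf (fun s t => (u θ s t) ^ 2) = ∫ p, (u θ p.1 p.2) ^ 2 ∂μH :=
      intHalf_eq (fun s t => (u θ s t) ^ 2) hint
    have h3 : A θ = ∫ p, (u θ p.1 p.2) ^ 2 ∂μH := by
      have : A θ = ∫ p, u θ p.1 p.2 * u θ p.1 p.2 ∂μH := rfl
      rw [this]
      exact integral_congr_ae (Eventually.of_forall (fun p => by ring))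
    rw [h3, ← h1, hE.normalized]
  have T2 : Tendsto A (𝓝 θ) (𝓝 1) := by
    rw [← hAθ]
    have h3 : A θ = ∫ p, u θ p.1 p.2 * u θ p.1 p.2 ∂μH := rfl
    rw [h3]
    have hgoal : Tendsto (fun θ' => ∫ p, u θ' p.1 p.2 * u θ p.1 p.2 ∂μH) (𝓝 θ)
        (𝓝 (∫ p, u θ p.1 p.2 * u θ p.1 p.2 ∂μH)) := by
      apply MeasureTheory.tendsto_integral_filter_of_dominated_convergence
        (bound := fun p => (|C₁| * C₀) * wt p)
      · filter_upwards [isOpen_Ioo.mem_nhds hθ] with θ' hθ'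
        exact ((contDiff_infty.mpr (fun n => (h.eigen θ' hθ').smooth n)).continuous.mul
          (cont_unc hwC)).aestronglyMeasurable
      · filter_upwards [isOpen_Ioo.mem_nhds hθ, Metric.ball_mem_nhds θ hε₁] with θ' h1 h2
        filter_upwards [ae_pos] with p hp
        have hb1 := hC₁' θ' h1 (by simpa [Real.dist_eq] using h2) p.1 p.2 hp.le
        have hb2 := hC₀ p.1 p.2 hp.le
        have hk : ((1 + |p.1| + p.2) ^ (4:ℕ))⁻¹ ≤ wt p := key_wt p.1 p.2 hp.le
        have hone : ((1 + |p.1| + p.2) ^ (4:ℕ))⁻¹ ≤ 1 := by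
          rw [inv_le_one_iff₀]
          right
          exact one_le_pow₀ (one_le_X p.1 p.2 hp.le)
        rw [Real.norm_eq_abs, abs_mul]
        calc |u θ' p.1 p.2| * |u θ p.1 p.2|
            ≤ (|C₁| * ((1 + |p.1| + p.2) ^ (4:ℕ))⁻¹) * (C₀ * ((1 + |p.1| + p.2) ^ (4:ℕ))⁻¹) :=
              mul_le_mul hb1 hb2 (abs_nonneg _) (by positivity)
          _ = (|C₁| * C₀) * (((1 + |p.1| + p.2) ^ (4:ℕ))⁻¹ * ((1 + |p.1| + p.2) ^ (4:ℕ))⁻¹) := by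
              ring
          _ ≤ (|C₁| * C₀) * (wt p * 1) := by
              refine mul_le_mul_of_nonneg_left ?_ (by positivity)
              exact mul_le_mul hk hone (by positivity) (wt_nonneg _)
          _ = (|C₁| * C₀) * wt p := by ring
      · exact wt_integrable.const_mul _
      · refine Eventually.of_forall (fun p => ?_)
        exact ((hUcont p).tendsto).mul tendsto_const_nhds
    exact hgoal
  have hσd : HasDerivAt σ (deriv σ θ) θ := by
    have h1 : DifferentiableOn ℝ σ (Set.Ioo a b) :=
      (h.sigma_smooth 1).differentiableOn (by norm_num)
    exact (h1.differentiableAt (isOpen_Ioo.mem_nhds hθ)).hasDerivAt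
  have T1 : Tendsto (slope σ θ) (𝓝[≠] θ) (𝓝 (deriv σ θ)) := hasDerivAt_iff_tendsto_slope.mp hσd
  set G : ℝ := ∫ p, 2 * Vpot θ p.1 p.2 * (- p.2 * Real.sin θ - p.1 * Real.cos θ)
      * (u θ p.1 p.2 * u θ p.1 p.2) ∂μH with hG_def
  have T3 : Tendsto (fun θ' => R θ' / (θ' - θ)) (𝓝[≠] θ) (𝓝 G) := by
    have hRdiv : ∀ θ', R θ' / (θ' - θ) = ∫ p,
        (Vpot θ' p.1 p.2 ^ 2 - Vpot θ p.1 p.2 ^ 2) / (θ' - θ)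
          * (u θ' p.1 p.2 * u θ p.1 p.2) ∂μH := by
      intro θ'
      have h0 : R θ' = ∫ p,
          (Vpot θ' p.1 p.2 ^ 2 - Vpot θ p.1 p.2 ^ 2) * (u θ' p.1 p.2 * u θ p.1 p.2) ∂μH := rfl
      rw [h0, ← MeasureTheory.integral_div]
      exact integral_congr_ae (Eventually.of_forall fun p => by ring)
    rw [hG_def, funext hRdiv]
    apply MeasureTheory.tendsto_integral_filter_of_dominated_convergence
      (bound := fun p => (2 * |C₁| * C₀) * wt p)
    · filter_upwards [nhdsWithin_le_nhds (isOpen_Ioo.mem_nhds hθ)] with θ' hθ'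
      refine Continuous.aestronglyMeasurable ?_
      exact ((((cont_V θ').pow 2).sub ((cont_V θ).pow 2)).div_const _).mul
        (((contDiff_infty.mpr (fun n => (h.eigen θ' hθ').smooth n)).continuous).mul
          (cont_unc hwC))
    · filter_upwards [nhdsWithin_le_nhds (isOpen_Ioo.mem_nhds hθ),
        nhdsWithin_le_nhds (Metric.ball_mem_nhds θ hε₁), self_mem_nhdsWithin] with θ' h1 h2 h3
      filter_upwards [ae_pos] with p hp
      have hb1 := hC₁' θ' h1 (by simpa [Real.dist_eq] using h2) p.1 p.2 hp.le
      have hb2 := hC₀ p.1 p.2 hp.le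
      have hk : ((1 + |p.1| + p.2) ^ (4:ℕ))⁻¹ ≤ wt p := key_wt p.1 p.2 hp.le
      have hd0 : θ' - θ ≠ 0 := sub_ne_zero.mpr h3
      have hq : |(Vpot θ' p.1 p.2 ^ 2 - Vpot θ p.1 p.2 ^ 2) / (θ' - θ)|
          ≤ 2 * (1 + |p.1| + p.2) ^ 2 := by
        rw [abs_div, div_le_iff₀ (abs_pos.mpr hd0)]
        exact abs_V_sq_diff_le θ θ' p.1 p.2 hp.le
      rw [Real.norm_eq_abs, abs_mul, abs_mul]
      have step1 : |(Vpot θ' p.1 p.2 ^ 2 - Vpot θ p.1 p.2 ^ 2) / (θ' - θ)|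
            * (|u θ' p.1 p.2| * |u θ p.1 p.2|)
          ≤ (2 * (1 + |p.1| + p.2) ^ 2) *
            ((|C₁| * ((1 + |p.1| + p.2) ^ (4:ℕ))⁻¹) * (C₀ * ((1 + |p.1| + p.2) ^ (4:ℕ))⁻¹)) :=
        mul_le_mul hq (mul_le_mul hb1 hb2 (abs_nonneg _) (by positivity))
          (by positivity) (by positivity)
      refine step1.trans ?_
      have hXpos := X_pos p.1 p.2 hp.le
      have hXX : (1 + |p.1| + p.2) ^ 2 * ((1 + |p.1| + p.2) ^ (4:ℕ))⁻¹ ≤ 1 := by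
        have h24 : (1 + |p.1| + p.2) ^ 2 ≤ (1 + |p.1| + p.2) ^ (4:ℕ) :=
          pow_le_pow_right₀ (one_le_X p.1 p.2 hp.le) (by norm_num)
        calc (1 + |p.1| + p.2) ^ 2 * ((1 + |p.1| + p.2) ^ (4:ℕ))⁻¹
            ≤ (1 + |p.1| + p.2) ^ (4:ℕ) * ((1 + |p.1| + p.2) ^ (4:ℕ))⁻¹ := by
              exact mul_le_mul_of_nonneg_right h24 (by positivity)
          _ = 1 := mul_inv_cancel₀ (by positivity)
      calc (2 * (1 + |p.1| + p.2) ^ 2) *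
            ((|C₁| * ((1 + |p.1| + p.2) ^ (4:ℕ))⁻¹) * (C₀ * ((1 + |p.1| + p.2) ^ (4:ℕ))⁻¹))
          = (2 * |C₁| * C₀) *
            (((1 + |p.1| + p.2) ^ 2 * ((1 + |p.1| + p.2) ^ (4:ℕ))⁻¹)
              * ((1 + |p.1| + p.2) ^ (4:ℕ))⁻¹) := by ring
        _ ≤ (2 * |C₁| * C₀) * (1 * wt p) := by
            refine mul_le_mul_of_nonneg_left ?_ (by positivity)
            exact mul_le_mul hXX hk (by positivity) zero_le_one
        _ = (2 * |C₁| * C₀) * wt p := by ring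
    · exact wt_integrable.const_mul _
    · refine Eventually.of_forall (fun p => ?_)
      have hq : HasDerivAt (fun x => Vpot x p.1 p.2 ^ 2)
          (2 * Vpot θ p.1 p.2 * (- p.2 * Real.sin θ - p.1 * Real.cos θ)) θ := by
        have hbase : HasDerivAt (fun x => p.2 * Real.cos x - p.1 * Real.sin x)
            (p.2 * (- Real.sin θ) - p.1 * Real.cos θ) θ :=
          ((Real.hasDerivAt_cos θ).const_mul p.2).sub ((Real.hasDerivAt_sin θ).const_mul p.1)
        have h3 : HasDerivAt (fun x => (p.2 * Real.cos x - p.1 * Real.sin x) ^ 2)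
            (2 * Vpot θ p.1 p.2 * (- p.2 * Real.sin θ - p.1 * Real.cos θ)) θ := by
          refine HasDerivAt.congr_deriv (hbase.pow 2) ?_
          simp only [Vpot]
          push_cast
          ring
        exact h3
      have hslope : Tendsto (slope (fun x => Vpot x p.1 p.2 ^ 2) θ) (𝓝[≠] θ)
          (𝓝 (2 * Vpot θ p.1 p.2 * (- p.2 * Real.sin θ - p.1 * Real.cos θ))) :=
        hasDerivAt_iff_tendsto_slope.mp hq
      have hu : Tendsto (fun θ' => u θ' p.1 p.2 * u θ p.1 p.2) (𝓝[≠] θ)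
          (𝓝 (u θ p.1 p.2 * u θ p.1 p.2)) :=
        (((hUcont p).tendsto).mul tendsto_const_nhds).mono_left nhdsWithin_le_nhds
      refine (hslope.mul hu).congr (fun θ' => ?_)
      rw [slope_def_field]
  have hev : ∀ᶠ θ' in 𝓝[≠] θ, slope σ θ θ' * A θ' = R θ' / (θ' - θ) := by
    filter_upwards [nhdsWithin_le_nhds (isOpen_Ioo.mem_nhds hθ), self_mem_nhdsWithin]
      with θ' h1 h2
    have hid := ident θ' h1
    rw [slope_def_field, div_mul_eq_mul_div, hid]
  have Tleft : Tendsto (fun θ' => slope σ θ θ' * A θ') (𝓝[≠] θ) (𝓝 (deriv σ θ * 1)) :=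
    T1.mul (T2.mono_left nhdsWithin_le_nhds)
  have hG : deriv σ θ * 1 = G :=
    tendsto_nhds_unique (Tendsto.congr' hev Tleft) T3
  -- identify G with the goal integral
  have dec_f1 : Dec 4 (fun s t =>
      Vpot θ s t * (- t * Real.sin θ - s * Real.cos θ) * (u θ s t) ^ 2) := by
    have base : Dec 6 (fun s t => (u θ s t) ^ 2) :=
      Dec.congr (fun s t => by ring) ((sch0 sw 3).mul (sch0 sw 3))
    have hgrow : ∀ s t : ℝ, 0 ≤ t →
        |Vpot θ s t * (- t * Real.sin θ - s * Real.cos θ)| ≤ (1 + |s| + t) ^ 2 := by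
      intro s t ht
      rw [abs_mul]
      have h1 := abs_V_le θ s t ht
      have h2 : |- t * Real.sin θ - s * Real.cos θ| ≤ (1 + |s| + t) ^ 1 := by
        rw [pow_one]
        calc |- t * Real.sin θ - s * Real.cos θ|
            ≤ |- t * Real.sin θ| + |s * Real.cos θ| := abs_sub _ _
          _ ≤ t * 1 + |s| * 1 := by
              rw [abs_mul, abs_mul, abs_neg, abs_of_nonneg ht]
              exact add_le_add (mul_le_mul_of_nonneg_left (Real.abs_sin_le_one θ) ht)
                (mul_le_mul_of_nonneg_left (Real.abs_cos_le_one θ) (abs_nonneg s))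
          _ ≤ 1 + |s| + t := by linarith
      calc |Vpot θ s t| * |- t * Real.sin θ - s * Real.cos θ|
          ≤ (1 + |s| + t) ^ 1 * (1 + |s| + t) ^ 1 :=
            mul_le_mul h1 h2 (abs_nonneg _) (by positivity)
        _ = (1 + |s| + t) ^ 2 := by ring
    have hres := Dec.mul_growth (n := 4) (k := 2) hgrow base
    exact Dec.congr (fun s t => by ring) hres
  have cont_f1 : Continuous fun p : ℝ × ℝ =>
      Vpot θ p.1 p.2 * (- p.2 * Real.sin θ - p.1 * Real.cos θ) * (u θ p.1 p.2) ^ 2 := by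
    refine ((cont_V θ).mul ?_).mul ((cont_unc hwC).pow 2)
    exact (continuous_snd.neg.mul continuous_const).sub (continuous_fst.mul continuous_const)
  have int_f1 := dec_f1.integrable cont_f1
  have hIH : intHalf (fun s t =>
        Vpot θ s t * (- t * Real.sin θ - s * Real.cos θ) * (u θ s t) ^ 2)
      = ∫ p, Vpot θ p.1 p.2 * (- p.2 * Real.sin θ - p.1 * Real.cos θ) * (u θ p.1 p.2) ^ 2 ∂μH :=
    intHalf_eq _ int_f1
  have hmain : deriv σ θ = 2 * intHalf (fun s t =>
      Vpot θ s t * (- t * Real.sin θ - s * Real.cos θ) * (u θ s t) ^ 2) := by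
    have h1 : deriv σ θ = G := by rw [← hG]; ring
    rw [h1, hG_def, hIH, ← MeasureTheory.integral_const_mul]
    exact integral_congr_ae (Eventually.of_forall fun p => by ring)
  refine ⟨hmain, ?_⟩
  have hneg : intHalf (fun s t =>
        (t * Real.cos θ - s * Real.sin θ) * (t * Real.sin θ + s * Real.cos θ) * (u θ s t) ^ 2)
      = - intHalf (fun s t =>
        Vpot θ s t * (- t * Real.sin θ - s * Real.cos θ) * (u θ s t) ^ 2) := by
    rw [intHalf, intHalf, ← integral_neg]
    refine integral_congr_ae (Eventually.of_forall fun s => ?_)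
    show (∫ t in Ioi (0:ℝ),
        (t * Real.cos θ - s * Real.sin θ) * (t * Real.sin θ + s * Real.cos θ) * (u θ s t) ^ 2)
      = -∫ t in Ioi (0:ℝ), Vpot θ s t * (- t * Real.sin θ - s * Real.cos θ) * (u θ s t) ^ 2
    rw [← integral_neg]
    refine integral_congr_ae (Eventually.of_forall fun t => ?_)
    show (t * Real.cos θ - s * Real.sin θ) * (t * Real.sin θ + s * Real.cos θ) * (u θ s t) ^ 2
      = -(Vpot θ s t * (- t * Real.sin θ - s * Real.cos θ) * (u θ s t) ^ 2)
    simp only [Vpot]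
    ring
  rw [hneg]
  linarith [hmain]
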